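/- arXiv:1106.4649 — 2 statements merged into one kernel-verified Lean document; each statement's English description precedes it below -/
import Mathlib

section
/- Let Q be a finite multiset of values with |Q| = N > 0 and let 0 < α < 1. Any value that is an α-majority of Q (occurs more than α·N times) must equal the k-th smallest element of Q for some k of the form k = ⌈i·α·N⌉ with 1 ≤ i ≤ ⌊1/α⌋. -/
lemma sorted_decomp {α : Type*} [LinearOrder α] (l : List α) (hs : l.Pairwise (· ≤ ·)) (w : α) :
    l = l.filter (fun x => decide (x < w)) ++
        (List.replicate (l.count w) w ++ l.filter (fun x => decide (w < x))) := by
  refine ((fun hp h2 => List.Perm.eq_of_pairwise' hs h2 hp) ?_ ?_)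
  · rw [List.perm_iff_count]
    intro x
    rw [List.count_append, List.count_append, List.count_replicate]
    rcases lt_trichotomy x w with h | h | h
    · have e1 : List.count x (List.filter (fun y => decide (y < w)) l) = List.count x l :=
        List.count_filter (by simpa using h)
      have e3 : List.count x (List.filter (fun y => decide (w < y)) l) = 0 :=
        List.count_eq_zero.2 (fun hx => by simp at hx; exact absurd hx.2 (not_lt.2 h.le))
      rw [e1, e3, if_neg (by simpa using h.ne')]
      omega
    · subst h
      have e1 : List.count x (List.filter (fun y => decide (y < x)) l) = 0 :=
        List.count_eq_zero.2 (fun hx => by simp at hx)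
      have e3 : List.count x (List.filter (fun y => decide (x < y)) l) = 0 :=
        List.count_eq_zero.2 (fun hx => by simp at hx)
      rw [e1, e3, if_pos (by simp)]
      omega
    · have e1 : List.count x (List.filter (fun y => decide (y < w)) l) = 0 :=
        List.count_eq_zero.2 (fun hx => by simp at hx; exact absurd hx.2 (not_lt.2 h.le))
      have e3 : List.count x (List.filter (fun y => decide (w < y)) l) = List.count x l :=
        List.count_filter (by simpa using h)
      rw [e1, e3, if_neg (by simpa using h.ne)]
      ring
  · rw [List.pairwise_append, List.pairwise_append]
    refine ⟨hs.filter _, ⟨?_, hs.filter _, ?_⟩, ?_⟩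
    · exact List.pairwise_replicate.2 (Or.inr le_rfl)
    · intro x hx y hy
      rw [List.eq_of_mem_replicate hx]
      simp at hy; exact hy.2.le
    · intro x hx y hy
      simp at hx
      rcases List.mem_append.1 hy with hy | hy
      · rw [List.eq_of_mem_replicate hy]; exact hx.2.le
      · simp at hy; exact hx.2.le.trans hy.2.le

lemma sorted_get_eq {α : Type*} [LinearOrder α] (l : List α) (hs : l.Pairwise (· ≤ ·)) (w : α)
    (j : ℕ) (h1 : (l.filter (fun x => decide (x < w))).length ≤ j)
    (h2 : j < (l.filter (fun x => decide (x < w))).length + l.count w) :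
    l[j]? = some w := by
  conv_lhs => rw [sorted_decomp l hs w]
  rw [List.getElem?_append_right h1, List.getElem?_append, List.length_replicate,
    if_pos (by omega), List.getElem?_replicate, if_pos (by omega)]

theorem majority_is_some_quantile {α : Type*} [LinearOrder α]
    (Q : Multiset α) (N : ℕ) (hN : Multiset.card Q = N) (hN0 : 0 < N)
    (a : ℝ) (ha0 : 0 < a) (ha1 : a < 1) (w : α)
    (hmaj : a * (N : ℝ) < (Q.count w : ℝ)) :
    ∃ i : ℕ, 1 ≤ i ∧ i ≤ ⌊1 / a⌋₊ ∧
      (Q.sort (· ≤ ·))[⌈(i : ℝ) * a * N⌉₊ - 1]? = some w := by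
  set l := Q.sort (· ≤ ·) with hl
  have hs : l.Pairwise (· ≤ ·) := Q.pairwise_sort _
  set c := (l.filter (fun x => decide (x < w))).length with hc
  set m := l.count w with hm
  have hmQ : m = Q.count w := by
    rw [hm, hl, ← Multiset.coe_count, Multiset.sort_eq]
  have hlen : l.length = N := by rw [hl, Multiset.length_sort, hN]
  have hcm : c + m ≤ N := by
    have := congrArg List.length (sorted_decomp l hs w)
    simp only [List.length_append, List.length_replicate] at this
    omega
  have haN : (0 : ℝ) < a * N := by positivity
  have hmaj' : a * N < (m : ℝ) := by rw [hmQ]; exact hmaj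
  set i := ⌊(c : ℝ) / (a * N)⌋₊ + 1 with hi
  have hic : (c : ℝ) < (i : ℝ) * a * N := by
    have h := Nat.lt_floor_add_one ((c : ℝ) / (a * N))
    rw [div_lt_iff₀ haN] at h
    push_cast [hi]
    nlinarith
  have hile : (i : ℝ) * a * N ≤ (c : ℝ) + a * N := by
    have h := Nat.floor_le (by positivity : (0:ℝ) ≤ (c : ℝ) / (a * N))
    rw [le_div_iff₀ haN] at h
    push_cast [hi]
    nlinarith
  have hiN : (i : ℝ) * a * N < N := by
    have h1 : (c : ℝ) + (m : ℝ) ≤ N := by exact_mod_cast Nat.cast_le.2 hcm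
    nlinarith
  refine ⟨i, by omega, ?_, ?_⟩
  · apply Nat.le_floor
    rw [le_div_iff₀ ha0]
    have hNpos : (0 : ℝ) < N := by exact_mod_cast hN0
    nlinarith [hiN]
  · set k := ⌈(i : ℝ) * a * N⌉₊ with hk
    have hk1 : c < k := Nat.lt_ceil.2 hic
    have hk2 : k ≤ c + m := by
      apply Nat.ceil_le.2
      have h : (i : ℝ) * a * N ≤ (c : ℝ) + (m : ℝ) := by linarith
      exact_mod_cast h
    exact sorted_get_eq l hs w (k - 1) (by omega) (by omega)
end

section
/- Let S be a finite sequence over alphabet {0,1}^h (bit strings of length h), viewed via a wavelet tree: for a prefix L ∈ {0,1}^d, let S(L) be the subsequence of S of symbols whose binary code starts with L, and let B(L) be the bit sequence whose i-th bit is the (d+1)-st bit of S(L)[i]. Then for any symbol c ∈ {0,1}^h and position i, the number of occurrences of c in S[0..i] equals the result of iteratively reducing i through the tree: starting with i₀ = i and setting i_{d+1} = rank_{c[d]}(B(c{..d}), i_d) − 1 for d = 0,…,h−1, we have rank_c(S, i) = i_h + 1. -/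
/-- The subsequence of `S` consisting of the symbols whose code starts with prefix `L`. -/
def wtSubseq (S : List (List Bool)) (L : List Bool) : List (List Bool) :=
  S.filter (fun s => s.take L.length == L)

/-- The bitmap stored at the node with label `L`: the `(|L|+1)`-st bit of each
symbol of the subsequence associated with `L`. -/
def wtBits (S : List (List Bool)) (L : List Bool) : List Bool :=
  (wtSubseq S L).map (fun s => s.getD L.length false)

/-- `rankZ b B j` = number of occurrences of bit `b` among positions `0..j` of `B`,
with the convention `rankZ b B (-1) = 0`. -/
def rankZ (b : Bool) (B : List Bool) (j : ℤ) : ℤ :=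
  ((B.take (j + 1).toNat).count b : ℤ)

/-- The iterative reduction of position `i` through the wavelet tree along the
path given by the code `c`: `red S c i 0 = i` and
`red S c i (d+1) = rank_{c[d]}(B(c{..d}), red S c i d) - 1`. -/
def wtRed (S : List (List Bool)) (c : List Bool) (i : ℕ) : ℕ → ℤ
  | 0 => (i : ℤ)
  | d + 1 => rankZ (c.getD d false) (wtBits S (c.take d)) (wtRed S c i d) - 1

lemma filter_take_count {α} (p : α → Bool) :
    ∀ (S : List α) (n : ℕ),
      (S.filter p).take ((S.take n).countP p) = (S.take n).filter p := by
  intro S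
  induction S with
  | nil => intro n; simp
  | cons a S ih =>
    intro n
    cases n with
    | zero => simp
    | succ n =>
      simp only [List.take_succ_cons, List.filter_cons, List.countP_cons]
      cases hpa : p a <;> simp [hpa, ih n, List.filter_cons]

lemma take_succ_eq {s c : List Bool} {d : ℕ} (hs : d < s.length) (hc : d < c.length) :
    (s.take (d+1) = c.take (d+1)) ↔
      (s.take d = c.take d ∧ s.getD d false = c.getD d false) := by
  rw [List.take_succ, List.take_succ, List.getElem?_eq_getElem hs,
    List.getElem?_eq_getElem hc]
  simp only [Option.toList_some, List.getD_eq_getElem _ _ hs, List.getD_eq_getElem _ _ hc]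
  constructor
  · intro hEq
    have := List.append_inj' hEq (by simp)
    simpa using this
  · rintro ⟨h1, h2⟩; rw [h1, h2]

theorem wavelet_tree_rank (h : ℕ) (S : List (List Bool))
    (hS : ∀ s ∈ S, s.length = h) (c : List Bool) (hc : c.length = h)
    (i : ℕ) (hi : i < S.length) :
    ((S.take (i + 1)).count c : ℤ) = wtRed S c i h + 1 := by
  set T := S.take (i+1) with hT
  have hTmem : ∀ s ∈ T, s ∈ S := fun s hs => List.mem_of_mem_take hs
  have key : ∀ d, d ≤ h →
      wtRed S c i d = (T.countP (fun s => s.take d == c.take d) : ℤ) - 1 := by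
    intro d hd
    induction d with
    | zero =>
      simp only [wtRed, List.take_zero]
      have : T.countP (fun s => ([] : List Bool) == []) = T.length := by
        simp
      rw [this]
      have : T.length = i + 1 := by
        rw [hT, List.length_take]; omega
      rw [this]; push_cast; ring
    | succ d ih =>
      have hdh : d < h := hd
      have ihe := ih (le_of_lt hdh)
      -- unfold one step
      rw [show wtRed S c i (d+1) =
        rankZ (c.getD d false) (wtBits S (c.take d)) (wtRed S c i d) - 1 from rfl, ihe]
      set m := T.countP (fun s => s.take d == c.take d) with hm
      have hct : (c.take d).length = d := by
        rw [List.length_take]; omega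
      have hnn : ((m : ℤ) - 1 + 1).toNat = m := by omega
      rw [rankZ, hnn]
      congr 1
      -- now a ℕ equation
      have hsub : wtSubseq S (c.take d) = S.filter (fun s => s.take d == c.take d) := by
        rw [wtSubseq, hct]
      have hbits : wtBits S (c.take d)
          = (S.filter (fun s => s.take d == c.take d)).map (fun s => s.getD d false) := by
        rw [wtBits, hsub, hct]
      rw [hbits, ← List.map_take, hm, filter_take_count, ← hT,
        List.count_eq_countP, List.countP_map, List.countP_filter]
      refine congrArg _ (List.countP_congr ?_)
      intro s hsT
      have hsl : s.length = h := hS s (hTmem s hsT)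
      have hs : d < s.length := by omega
      have hcd : d < c.length := by omega
      simp only [Function.comp, beq_iff_eq, Bool.and_eq_true]
      rw [take_succ_eq hs hcd]
      tauto
  have hfin := key h le_rfl
  rw [hfin]
  have : T.count c = T.countP (fun s => s.take h == c.take h) := by
    rw [List.count_eq_countP]
    apply List.countP_congr
    intro s hsT
    have hsl : s.length = h := hS s (hTmem s hsT)
    have h1 : s.take h = s := by rw [← hsl, List.take_length]
    have h2 : c.take h = c := by rw [← hc, List.take_length]
    simp [h1, h2]
  rw [this]
  ring
end
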